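/- For the SIR-SI fluid system with two controls σ¹(t) ≥ σ²(t) for all t and equal initial conditions (x_b, x_d, y)(0), the corresponding trajectories satisfy x_b¹(t) ≥ x_b²(t), x_d¹(t) ≥ x_d²(t), and y¹(t) ≥ y²(t) for all t ≥ 0. -/

import Mathlib

open Set Filter Topology


lemma kamke_pos (w L : Fin 3 → ℝ → ℝ)
    (hd : ∀ i, ∀ t ∈ Set.Ici (0:ℝ), HasDerivAt (w i) (L i t) t)
    (hpos : ∀ i, ∀ t ∈ Set.Ici (0:ℝ), (∀ j, 0 ≤ w j t) → w i t = 0 → 0 < L i t)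
    (h0 : ∀ i, 0 < w i 0) :
    ∀ t ∈ Set.Ici (0:ℝ), ∀ i, 0 < w i t := by
  intro t0 ht0
  by_contra hcon
  push_neg at hcon
  obtain ⟨i0, hi0⟩ := hcon
  have ht0' : (0:ℝ) ≤ t0 := ht0
  set S : Set ℝ := ⋃ i, (Set.Icc (0:ℝ) t0 ∩ (w i) ⁻¹' Set.Iic 0) with hS
  have hcont : ∀ i, ContinuousOn (w i) (Set.Icc (0:ℝ) t0) := fun i t ht =>
    ((hd i t ht.1).continuousAt).continuousWithinAt
  have hSclosed : IsClosed S :=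
    isClosed_iUnion_of_finite fun i =>
      (hcont i).preimage_isClosed_of_isClosed isClosed_Icc isClosed_Iic
  have hne : S.Nonempty := ⟨t0, Set.mem_iUnion.2 ⟨i0, ⟨ht0', le_refl t0⟩, hi0⟩⟩
  have hbdd : BddBelow S := ⟨0, fun x hx => by
    obtain ⟨i, hi⟩ := Set.mem_iUnion.1 hx; exact hi.1.1⟩
  set τ := sInf S with hτ
  have hmem : τ ∈ S := hSclosed.csInf_mem hne hbdd
  obtain ⟨i, hiτ⟩ := Set.mem_iUnion.1 hmem
  have hτ0 : (0:ℝ) ≤ τ := hiτ.1.1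
  have hτt0 : τ ≤ t0 := hiτ.1.2
  have hlt : ∀ t, 0 ≤ t → t < τ → ∀ j, 0 < w j t := by
    intro t h1 h2 j
    by_contra h
    push_neg at h
    exact absurd (csInf_le hbdd (Set.mem_iUnion.2 ⟨j, ⟨h1, h2.le.trans hτt0⟩, h⟩))
      (not_le.mpr h2)
  have hτpos : 0 < τ := by
    rcases hτ0.lt_or_eq with h | h
    · exact h
    · exfalso
      have h2 : w i τ ≤ 0 := hiτ.2
      rw [← h] at h2
      linarith [h0 i]
  have hIoo : Set.Ioo (0:ℝ) τ ∈ 𝓝[<] τ := Ioo_mem_nhdsLT_of_mem ⟨hτpos, le_refl τ⟩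
  have hge : ∀ j, 0 ≤ w j τ := by
    intro j
    have hc : Filter.Tendsto (w j) (𝓝[<] τ) (𝓝 (w j τ)) :=
      ((hd j τ hτ0).continuousAt.tendsto).mono_left nhdsWithin_le_nhds
    refine ge_of_tendsto hc ?_
    filter_upwards [hIoo] with t ht
    exact (hlt t ht.1.le ht.2 j).le
  have hwiτ : w i τ = 0 := le_antisymm hiτ.2 (hge i)
  have hL : 0 < L i τ := hpos i τ hτ0 hge hwiτ
  have hs := hasDerivAt_iff_tendsto_slope.mp (hd i τ hτ0)
  have h1 : ∀ᶠ t in 𝓝[≠] τ, 0 < slope (w i) τ t := hs.eventually (lt_mem_nhds hL)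
  have h2 : ∀ᶠ t in 𝓝[<] τ, 0 < slope (w i) τ t :=
    h1.filter_mono (nhdsWithin_mono τ fun x hx => ne_of_lt hx)
  obtain ⟨t, hslope, htIoo⟩ := (h2.and (eventually_of_mem hIoo fun x hx => hx)).exists
  have hwt : 0 < w i t := hlt t htIoo.1.le htIoo.2 i
  have : slope (w i) τ t < 0 := by
    rw [slope_def_field]
    rw [hwiτ]
    have : t - τ < 0 := by linarith [htIoo.2]
    exact div_neg_of_pos_of_neg (by linarith) this
  linarith


lemma drift_xb (β lam a b d xb1 xd1 y1 xb2 xd2 y2 : ℝ)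
    (hβ : 0 ≤ β) (hlam : 0 ≤ lam) (ha : 0 < a)
    (hu : xb1 - xb2 = -a) (hv : -a ≤ xd1 - xd2) (hw : -a ≤ y1 - y2)
    (r1 : 0 ≤ xb1 ∧ xb1 ≤ b ∧ 0 ≤ xd1 ∧ xd1 ≤ d ∧ 0 ≤ y1 ∧ y1 ≤ 1 - b - d)
    (r2 : 0 ≤ xb2 ∧ xb2 ≤ b ∧ 0 ≤ xd2 ∧ xd2 ≤ d ∧ 0 ≤ y2 ∧ y2 ≤ 1 - b - d) :
    -((β + 7 * lam) * a) ≤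
      β * xd1 + lam * (b - xb1) * (xb1 + xd1 + y1) -
        (β * xd2 + lam * (b - xb2) * (xb2 + xd2 + y2)) := by
  obtain ⟨h1, h2, h3, h4, h5, h6⟩ := r1
  obtain ⟨g1, g2, g3, g4, g5, g6⟩ := r2
  have hb1 : b - xb1 ≤ 1 := by linarith
  have hb0 : 0 ≤ b - xb1 := by linarith
  have k1 : 0 ≤ lam * (b - xb1) * ((xb1 - xb2) + (xd1 - xd2) + (y1 - y2) + 3 * a) := by
    apply mul_nonneg (mul_nonneg hlam hb0); linarith
  have k2 : 0 ≤ lam * (1 - (b - xb1)) * (3 * a) := by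
    apply mul_nonneg (mul_nonneg hlam (by linarith)); linarith
  have k3 : 0 ≤ lam * a * (xb2 + xd2 + y2) := by
    apply mul_nonneg (mul_nonneg hlam ha.le); linarith
  have k4 : 0 ≤ β * ((xd1 - xd2) + a) := mul_nonneg hβ (by linarith)
  nlinarith [k1, k2, k3, k4, mul_nonneg hlam ha.le]

lemma drift_xd (β lam Γ a b d xb1 xd1 y1 xb2 xd2 y2 : ℝ)
    (hβ : 0 ≤ β) (hlam : 0 ≤ lam) (hΓ0 : 0 ≤ Γ) (hΓ1 : Γ ≤ 1) (ha : 0 < a)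
    (hu : -a ≤ xb1 - xb2) (hv : xd1 - xd2 = -a) (hw : -a ≤ y1 - y2)
    (r1 : 0 ≤ xb1 ∧ xb1 ≤ b ∧ 0 ≤ xd1 ∧ xd1 ≤ d ∧ 0 ≤ y1 ∧ y1 ≤ 1 - b - d)
    (r2 : 0 ≤ xb2 ∧ xb2 ≤ b ∧ 0 ≤ xd2 ∧ xd2 ≤ d ∧ 0 ≤ y2 ∧ y2 ≤ 1 - b - d) :
    -((β + 7 * lam) * a) ≤
      (Γ * lam * (d - xd1) * y1 + Γ * lam * xd1 * (1 - b - d) +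
        lam * (d - xd1) * (xb1 + xd1 + y1) - β * xd1) -
      (Γ * lam * (d - xd2) * y2 + Γ * lam * xd2 * (1 - b - d) +
        lam * (d - xd2) * (xb2 + xd2 + y2) - β * xd2) := by
  obtain ⟨h1, h2, h3, h4, h5, h6⟩ := r1
  obtain ⟨g1, g2, g3, g4, g5, g6⟩ := r2
  have hd1 : d - xd1 ≤ 1 := by linarith
  have hd0 : 0 ≤ d - xd1 := by linarith
  have hs0 : 0 ≤ 1 - b - d := by linarith
  have k1 : 0 ≤ Γ * lam * (d - xd1) * ((y1 - y2) + a) := by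
    apply mul_nonneg (mul_nonneg (mul_nonneg hΓ0 hlam) hd0); linarith
  have k2 : 0 ≤ (1 - Γ) * lam * a :=
    mul_nonneg (mul_nonneg (by linarith) hlam) ha.le
  have k3 : 0 ≤ Γ * lam * (1 - (d - xd1)) * a := by
    apply mul_nonneg (mul_nonneg (mul_nonneg hΓ0 hlam) (by linarith)) ha.le
  have k4 : 0 ≤ Γ * lam * a * y2 :=
    mul_nonneg (mul_nonneg (mul_nonneg hΓ0 hlam) ha.le) g5
  have k5 : 0 ≤ Γ * lam * (b + d) * a := by
    apply mul_nonneg (mul_nonneg (mul_nonneg hΓ0 hlam) (by linarith)) ha.le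
  have k6 : 0 ≤ lam * (d - xd1) * ((xb1 - xb2) + (xd1 - xd2) + (y1 - y2) + 3 * a) := by
    apply mul_nonneg (mul_nonneg hlam hd0); linarith
  have k7 : 0 ≤ lam * (1 - (d - xd1)) * (3 * a) := by
    apply mul_nonneg (mul_nonneg hlam (by linarith)); linarith
  have k8 : 0 ≤ lam * a * (xb2 + xd2 + y2) := by
    apply mul_nonneg (mul_nonneg hlam ha.le); linarith
  have k9 : 0 ≤ β * a := mul_nonneg hβ ha.le
  nlinarith [k1, k2, k3, k4, k5, k6, k7, k8, k9, mul_nonneg hlam ha.le]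

lemma drift_y (β lam Γ σ1 σ2 a b d xb1 xd1 y1 xb2 xd2 y2 : ℝ)
    (hβ : 0 ≤ β) (hlam : 0 ≤ lam) (hΓ0 : 0 ≤ Γ) (hΓ1 : Γ ≤ 1) (ha : 0 < a)
    (hσ2 : 0 ≤ σ2) (hσ1 : σ1 ≤ 1) (hσle : σ2 ≤ σ1)
    (hu : -a ≤ xb1 - xb2) (hv : -a ≤ xd1 - xd2) (hw : y1 - y2 = -a)
    (r1 : 0 ≤ xb1 ∧ xb1 ≤ b ∧ 0 ≤ xd1 ∧ xd1 ≤ d ∧ 0 ≤ y1 ∧ y1 ≤ 1 - b - d)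
    (r2 : 0 ≤ xb2 ∧ xb2 ≤ b ∧ 0 ≤ xd2 ∧ xd2 ≤ d ∧ 0 ≤ y2 ∧ y2 ≤ 1 - b - d) :
    -((β + 7 * lam) * a) ≤
      (-(Γ * lam * d * y1) + lam * σ1 * ((1 - b - d) - y1) * (xb1 + y1 + (1 - Γ) * xd1)) -
      (-(Γ * lam * d * y2) + lam * σ2 * ((1 - b - d) - y2) * (xb2 + y2 + (1 - Γ) * xd2)) := by
  obtain ⟨h1, h2, h3, h4, h5, h6⟩ := r1
  obtain ⟨g1, g2, g3, g4, g5, g6⟩ := r2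
  have hy2eq : y2 = y1 + a := by linarith
  subst hy2eq
  have hσ2' : σ2 ≤ 1 := hσle.trans hσ1
  have hsy0 : 0 ≤ (1 - b - d) - y1 := by linarith
  have hsy1 : (1 - b - d) - y1 ≤ 1 := by linarith
  have hA1 : 0 ≤ xb1 + y1 + (1 - Γ) * xd1 := by
    nlinarith [mul_nonneg (sub_nonneg.2 hΓ1) h3]
  have hA2 : 0 ≤ xb2 + (y1 + a) + (1 - Γ) * xd2 := by
    nlinarith [mul_nonneg (sub_nonneg.2 hΓ1) g3]
  have hΔA : 0 ≤ (xb1 - xb2) + (y1 - (y1 + a)) + (1 - Γ) * (xd1 - xd2) + 3 * a := by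
    nlinarith [mul_nonneg (sub_nonneg.2 hΓ1) (by linarith : (0:ℝ) ≤ (xd1 - xd2) + a)]
  have m1 : 0 ≤ Γ * lam * d * a := by
    apply mul_nonneg (mul_nonneg (mul_nonneg hΓ0 hlam) (by linarith)) ha.le
  have m2 : 0 ≤ lam * (σ1 - σ2) * ((1 - b - d) - y1) * (xb1 + y1 + (1 - Γ) * xd1) := by
    apply mul_nonneg (mul_nonneg (mul_nonneg hlam (by linarith)) hsy0) hA1
  have m3 : 0 ≤ lam * σ2 * ((1 - b - d) - y1) *
      ((xb1 - xb2) + (y1 - (y1 + a)) + (1 - Γ) * (xd1 - xd2) + 3 * a) :=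
    mul_nonneg (mul_nonneg (mul_nonneg hlam hσ2) hsy0) hΔA
  have m4 : 0 ≤ lam * (1 - σ2) * (3 * a) :=
    mul_nonneg (mul_nonneg hlam (by linarith)) (by linarith)
  have m5 : 0 ≤ lam * σ2 * (1 - ((1 - b - d) - y1)) * (3 * a) := by
    apply mul_nonneg (mul_nonneg (mul_nonneg hlam hσ2) (by linarith)); linarith
  have m6 : 0 ≤ lam * σ2 * a * (xb2 + (y1 + a) + (1 - Γ) * xd2) :=
    mul_nonneg (mul_nonneg (mul_nonneg hlam hσ2) ha.le) hA2
  have m7 : 0 ≤ β * a := mul_nonneg hβ ha.le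
  linarith [m1, m2, m3, m4, m5, m6, m7, mul_nonneg hlam ha.le]


/-- Comparison for the SIR-SI fluid system: with the same underlying SIR trajectory
`(b,d)`, two controls `σ¹(t) ≥ σ²(t)` and equal initial conditions yield ordered
trajectories: `x_b¹ ≥ x_b²`, `x_d¹ ≥ x_d²`, `y¹ ≥ y²` for all `t ≥ 0`. -/
theorem stmt16 (β lam Γ : ℝ) (hβ : 0 < β) (hlam : 0 < lam) (hΓ : Γ ∈ Set.Icc (0:ℝ) 1)
    (σ1 σ2 : ℝ → ℝ)
    (hσ1 : ∀ t, σ1 t ∈ Set.Icc (0:ℝ) 1) (hσ2 : ∀ t, σ2 t ∈ Set.Icc (0:ℝ) 1)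
    (hσle : ∀ t, σ2 t ≤ σ1 t)
    (b d : ℝ → ℝ)
    (xb1 xd1 y1 xb2 xd2 y2 : ℝ → ℝ)
    (hxb1 : ∀ t ∈ Set.Ici (0:ℝ),
      HasDerivAt xb1 (β * xd1 t + lam * (b t - xb1 t) * (xb1 t + xd1 t + y1 t)) t)
    (hxd1 : ∀ t ∈ Set.Ici (0:ℝ),
      HasDerivAt xd1 (Γ * lam * (d t - xd1 t) * y1 t + Γ * lam * xd1 t * (1 - b t - d t) +
        lam * (d t - xd1 t) * (xb1 t + xd1 t + y1 t) - β * xd1 t) t)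
    (hy1 : ∀ t ∈ Set.Ici (0:ℝ),
      HasDerivAt y1 (-(Γ * lam * d t * y1 t) +
        lam * σ1 t * ((1 - b t - d t) - y1 t) * (xb1 t + y1 t + (1 - Γ) * xd1 t)) t)
    (hxb2 : ∀ t ∈ Set.Ici (0:ℝ),
      HasDerivAt xb2 (β * xd2 t + lam * (b t - xb2 t) * (xb2 t + xd2 t + y2 t)) t)
    (hxd2 : ∀ t ∈ Set.Ici (0:ℝ),
      HasDerivAt xd2 (Γ * lam * (d t - xd2 t) * y2 t + Γ * lam * xd2 t * (1 - b t - d t) +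
        lam * (d t - xd2 t) * (xb2 t + xd2 t + y2 t) - β * xd2 t) t)
    (hy2 : ∀ t ∈ Set.Ici (0:ℝ),
      HasDerivAt y2 (-(Γ * lam * d t * y2 t) +
        lam * σ2 t * ((1 - b t - d t) - y2 t) * (xb2 t + y2 t + (1 - Γ) * xd2 t)) t)
    (hregion1 : ∀ t ∈ Set.Ici (0:ℝ),
      0 ≤ xb1 t ∧ xb1 t ≤ b t ∧ 0 ≤ xd1 t ∧ xd1 t ≤ d t ∧
      0 ≤ y1 t ∧ y1 t ≤ 1 - b t - d t)
    (hregion2 : ∀ t ∈ Set.Ici (0:ℝ),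
      0 ≤ xb2 t ∧ xb2 t ≤ b t ∧ 0 ≤ xd2 t ∧ xd2 t ≤ d t ∧
      0 ≤ y2 t ∧ y2 t ≤ 1 - b t - d t)
    (hinit : xb1 0 = xb2 0 ∧ xd1 0 = xd2 0 ∧ y1 0 = y2 0) :
    ∀ t ∈ Set.Ici (0:ℝ), xb2 t ≤ xb1 t ∧ xd2 t ≤ xd1 t ∧ y2 t ≤ y1 t := by
  set K : ℝ := β + 7 * lam + 1 with hK
  have main : ∀ ε : ℝ, 0 < ε → ∀ t ∈ Set.Ici (0:ℝ),
      0 < xb1 t - xb2 t + ε * Real.exp (K * t) ∧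
      0 < xd1 t - xd2 t + ε * Real.exp (K * t) ∧
      0 < y1 t - y2 t + ε * Real.exp (K * t) := by
    intro ε hε
    set E : ℝ → ℝ := fun t => ε * Real.exp (K * t) with hEdef
    have hE' : ∀ t : ℝ, HasDerivAt E (K * E t) t := by
      intro t
      have h1 : HasDerivAt (fun t : ℝ => K * t) K t := by
        simpa using (hasDerivAt_id t).const_mul K
      have h2 : HasDerivAt (fun t : ℝ => Real.exp (K * t)) (Real.exp (K * t) * K) t :=
        (Real.hasDerivAt_exp (K * t)).comp t h1
      have h3 := h2.const_mul ε
      have h4 : ε * (Real.exp (K * t) * K) = K * E t := by rw [hEdef]; ring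
      rw [h4] at h3
      exact h3
    have hEpos : ∀ t : ℝ, 0 < E t := fun t => mul_pos hε (Real.exp_pos _)
    set w : Fin 3 → ℝ → ℝ :=
      ![fun t => xb1 t - xb2 t + E t,
        fun t => xd1 t - xd2 t + E t,
        fun t => y1 t - y2 t + E t] with hw
    set L : Fin 3 → ℝ → ℝ :=
      ![fun t => (β * xd1 t + lam * (b t - xb1 t) * (xb1 t + xd1 t + y1 t)) -
          (β * xd2 t + lam * (b t - xb2 t) * (xb2 t + xd2 t + y2 t)) + K * E t,
        fun t => (Γ * lam * (d t - xd1 t) * y1 t + Γ * lam * xd1 t * (1 - b t - d t) +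
            lam * (d t - xd1 t) * (xb1 t + xd1 t + y1 t) - β * xd1 t) -
          (Γ * lam * (d t - xd2 t) * y2 t + Γ * lam * xd2 t * (1 - b t - d t) +
            lam * (d t - xd2 t) * (xb2 t + xd2 t + y2 t) - β * xd2 t) + K * E t,
        fun t => (-(Γ * lam * d t * y1 t) +
            lam * σ1 t * ((1 - b t - d t) - y1 t) * (xb1 t + y1 t + (1 - Γ) * xd1 t)) -
          (-(Γ * lam * d t * y2 t) +
            lam * σ2 t * ((1 - b t - d t) - y2 t) * (xb2 t + y2 t + (1 - Γ) * xd2 t)) +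
          K * E t] with hL
    have hd : ∀ i, ∀ t ∈ Set.Ici (0:ℝ), HasDerivAt (w i) (L i t) t := by
      intro i t ht
      fin_cases i
      · exact ((hxb1 t ht).sub (hxb2 t ht)).add (hE' t)
      · exact ((hxd1 t ht).sub (hxd2 t ht)).add (hE' t)
      · exact ((hy1 t ht).sub (hy2 t ht)).add (hE' t)
    have hpos : ∀ i, ∀ t ∈ Set.Ici (0:ℝ), (∀ j, 0 ≤ w j t) → w i t = 0 → 0 < L i t := by
      intro i t ht hall hzero
      have hu : 0 ≤ xb1 t - xb2 t + E t := hall 0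
      have hv : 0 ≤ xd1 t - xd2 t + E t := hall 1
      have hwy : 0 ≤ y1 t - y2 t + E t := hall 2
      have ha : 0 < E t := hEpos t
      have r1 := hregion1 t ht
      have r2 := hregion2 t ht
      have hKE : K * E t = (β + 7 * lam) * E t + E t := by rw [hK]; ring
      fin_cases i
      · have hz : xb1 t - xb2 t + E t = 0 := hzero
        have hdr := drift_xb β lam (E t) (b t) (d t) (xb1 t) (xd1 t) (y1 t)
          (xb2 t) (xd2 t) (y2 t) hβ.le hlam.le ha (by linarith) (by linarith) (by linarith)
          r1 r2
        show (0:ℝ) < (β * xd1 t + lam * (b t - xb1 t) * (xb1 t + xd1 t + y1 t)) -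
          (β * xd2 t + lam * (b t - xb2 t) * (xb2 t + xd2 t + y2 t)) + K * E t
        linarith
      · have hz : xd1 t - xd2 t + E t = 0 := hzero
        have hdr := drift_xd β lam Γ (E t) (b t) (d t) (xb1 t) (xd1 t) (y1 t)
          (xb2 t) (xd2 t) (y2 t) hβ.le hlam.le hΓ.1 hΓ.2 ha (by linarith) (by linarith)
          (by linarith) r1 r2
        show (0:ℝ) < (Γ * lam * (d t - xd1 t) * y1 t + Γ * lam * xd1 t * (1 - b t - d t) +
            lam * (d t - xd1 t) * (xb1 t + xd1 t + y1 t) - β * xd1 t) -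
          (Γ * lam * (d t - xd2 t) * y2 t + Γ * lam * xd2 t * (1 - b t - d t) +
            lam * (d t - xd2 t) * (xb2 t + xd2 t + y2 t) - β * xd2 t) + K * E t
        linarith
      · have hz : y1 t - y2 t + E t = 0 := hzero
        have hdr := drift_y β lam Γ (σ1 t) (σ2 t) (E t) (b t) (d t) (xb1 t) (xd1 t) (y1 t)
          (xb2 t) (xd2 t) (y2 t) hβ.le hlam.le hΓ.1 hΓ.2 ha (hσ2 t).1 (hσ1 t).2 (hσle t)
          (by linarith) (by linarith) (by linarith) r1 r2
        show (0:ℝ) < (-(Γ * lam * d t * y1 t) +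
            lam * σ1 t * ((1 - b t - d t) - y1 t) * (xb1 t + y1 t + (1 - Γ) * xd1 t)) -
          (-(Γ * lam * d t * y2 t) +
            lam * σ2 t * ((1 - b t - d t) - y2 t) * (xb2 t + y2 t + (1 - Γ) * xd2 t)) +
          K * E t
        linarith
    have h0 : ∀ i, 0 < w i 0 := by
      intro i
      fin_cases i
      · show (0:ℝ) < xb1 0 - xb2 0 + E 0
        have := hEpos 0
        have := hinit.1
        linarith
      · show (0:ℝ) < xd1 0 - xd2 0 + E 0
        have := hEpos 0
        have := hinit.2.1
        linarith
      · show (0:ℝ) < y1 0 - y2 0 + E 0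
        have := hEpos 0
        have := hinit.2.2
        linarith
    have hk := kamke_pos w L hd hpos h0
    intro t ht
    exact ⟨hk t ht 0, hk t ht 1, hk t ht 2⟩
  intro t0 ht0
  have hfin : ∀ z : ℝ, (∀ ε : ℝ, 0 < ε → 0 < z + ε * Real.exp (K * t0)) → 0 ≤ z := by
    intro z h
    by_contra hz
    push_neg at hz
    have hEp : 0 < Real.exp (K * t0) := Real.exp_pos _
    have hε : 0 < -z / (2 * Real.exp (K * t0)) := div_pos (by linarith) (by linarith)
    have h2 := h _ hε
    have heq : -z / (2 * Real.exp (K * t0)) * Real.exp (K * t0) = -z / 2 := by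
      field_simp
    rw [heq] at h2
    linarith
  refine ⟨?_, ?_, ?_⟩
  · have := hfin (xb1 t0 - xb2 t0) fun ε hε => ((main ε hε t0 ht0).1)
    linarith
  · have := hfin (xd1 t0 - xd2 t0) fun ε hε => ((main ε hε t0 ht0).2.1)
    linarith
  · have := hfin (y1 t0 - y2 t0) fun ε hε => ((main ε hε t0 ht0).2.2)
    linarith
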